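/- Let n ≥ 3 and let m ≥ 1 be a fixed integer. Then lim_{λ→∞} tr(I_n − (I_n − S(λ))ᵐ) = 2. (The limit 2 equals the dimension of the kernel of DDᵀ, which is the 2-dimensional space of linear trends, because the second-differencing matrix Dᵀ has full row rank n−2.) -/

import Mathlib

open Matrix Filter

noncomputable section

/-- The second-differencing matrix `Dᵀ` of the HP filter: the `(n−2) × n` real matrix with
`(Dᵀ f)_j = f_j − 2 f_{j+1} + f_{j+2}` (here written with 0-based indices). -/
def secondDiff (n : ℕ) : Matrix (Fin (n - 2)) (Fin n) ℝ := fun j t =>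
  if t.1 = j.1 then 1 else if t.1 = j.1 + 1 then -2 else if t.1 = j.1 + 2 then 1 else 0

/-- The HP smoothing matrix `S(λ) = (I_n + λ D Dᵀ)⁻¹`, where `Dᵀ = secondDiff n`. -/
def hpS (n : ℕ) (lam : ℝ) : Matrix (Fin n) (Fin n) ℝ :=
  (1 + lam • ((secondDiff n)ᵀ * secondDiff n))⁻¹

/-- `secondDiff n` has full row rank `n - 2`. -/
lemma secondDiff_rank (n : ℕ) (hn : 3 ≤ n) : (secondDiff n).rank = n - 2 := by
  classical
  have hle : n - 2 ≤ n := Nat.sub_le n 2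
  -- column selector matrix
  set E : Matrix (Fin n) (Fin (n - 2)) ℝ :=
    fun t k => if t = Fin.castLE hle k then 1 else 0 with hE
  have hmul : ∀ j k, (secondDiff n * E) j k = secondDiff n j (Fin.castLE hle k) := by
    intro j k
    rw [Matrix.mul_apply]
    simp [hE]
  have htri : (secondDiff n * E).BlockTriangular id := by
    intro i j hij
    rw [hmul]
    simp only [id] at hij
    have h1 : (Fin.castLE hle j).1 = j.1 := rfl
    have hj : j.1 < i.1 := hij
    simp only [secondDiff, h1]
    rw [if_neg (by omega), if_neg (by omega), if_neg (by omega)]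
  have hdiag : ∀ i, (secondDiff n * E) i i = 1 := by
    intro i
    rw [hmul]
    simp [secondDiff]
  have hdet : (secondDiff n * E).det = 1 := by
    rw [Matrix.det_of_upperTriangular htri]
    simp [hdiag]
  have hunit : IsUnit (secondDiff n * E) := by
    rw [Matrix.isUnit_iff_isUnit_det, hdet]; exact isUnit_one
  have hr : (secondDiff n * E).rank = n - 2 := by
    rw [Matrix.rank_of_isUnit _ hunit, Fintype.card_fin]
  refine le_antisymm ?_ ?_
  · simpa using (secondDiff n).rank_le_card_height
  · calc n - 2 = (secondDiff n * E).rank := hr.symm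
      _ ≤ (secondDiff n).rank := Matrix.rank_mul_le_left _ _

/-- For `n ≥ 3` and fixed `m ≥ 1`,
`lim_{λ→∞} tr(I_n − (I_n − S(λ))ᵐ) = 2`. -/
theorem stmt11 (n : ℕ) (hn : 3 ≤ n) (m : ℕ) (hm : 1 ≤ m) :
    Tendsto (fun lam : ℝ => Matrix.trace (1 - (1 - hpS n lam) ^ m)) atTop (nhds 2) := by
  classical
  set D := secondDiff n with hD
  have hDT : Dᴴ = Dᵀ := by
    ext i j; simp [Matrix.conjTranspose_apply]
  set A : Matrix (Fin n) (Fin n) ℝ := Dᵀ * D with hAdef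
  have hpsd : A.PosSemidef := by
    rw [hAdef, ← hDT]; exact Matrix.posSemidef_conjTranspose_mul_self D
  have hA : A.IsHermitian := hpsd.1
  set μ : Fin n → ℝ := hA.eigenvalues with hμ
  have hμ0 : ∀ i, 0 ≤ μ i := hpsd.eigenvalues_nonneg
  set U : Matrix (Fin n) (Fin n) ℝ := (Matrix.IsHermitian.eigenvectorUnitary hA : Matrix (Fin n) (Fin n) ℝ) with hUdef
  have hU1 : U * star U = 1 :=
    (Matrix.mem_unitaryGroup_iff).mp (Matrix.IsHermitian.eigenvectorUnitary hA).2
  have hU2 : star U * U = 1 :=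
    (Matrix.mem_unitaryGroup_iff').mp (Matrix.IsHermitian.eigenvectorUnitary hA).2
  have hspec : A = U * Matrix.diagonal μ * star U := by
    have := hA.spectral_theorem
    simpa [RCLike.ofReal_real_eq_id] using this
  -- conjugation lemmas
  have conj_mul : ∀ (c e : Fin n → ℝ),
      (U * Matrix.diagonal c * star U) * (U * Matrix.diagonal e * star U)
        = U * Matrix.diagonal (c * e) * star U := by
    intro c e
    calc (U * Matrix.diagonal c * star U) * (U * Matrix.diagonal e * star U)
        = U * Matrix.diagonal c * (star U * U) * Matrix.diagonal e * star U := by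
          simp only [Matrix.mul_assoc]
      _ = U * Matrix.diagonal (c * e) * star U := by
          rw [hU2]
          simp only [Matrix.mul_one, Matrix.mul_assoc, Matrix.diagonal_mul_diagonal]
          rfl
  have conj_one : U * Matrix.diagonal (1 : Fin n → ℝ) * star U = 1 := by
    have h : Matrix.diagonal (1 : Fin n → ℝ) = 1 := Matrix.diagonal_one
    rw [h, Matrix.mul_one, hU1]
  have conj_sub : ∀ (c e : Fin n → ℝ),
      (U * Matrix.diagonal c * star U) - (U * Matrix.diagonal e * star U)
        = U * Matrix.diagonal (c - e) * star U := by
    intro c e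
    have h : Matrix.diagonal (c - e) = Matrix.diagonal c - Matrix.diagonal e := by
      rw [Matrix.diagonal_sub]; rfl
    rw [h, Matrix.mul_sub, Matrix.sub_mul]
  have conj_pow : ∀ (c : Fin n → ℝ) (k : ℕ),
      (U * Matrix.diagonal c * star U) ^ k = U * Matrix.diagonal (c ^ k) * star U := by
    intro c k
    induction k with
    | zero => simpa using conj_one.symm
    | succ k ih =>
        rw [pow_succ, ih, conj_mul, ← pow_succ]
  -- the key pointwise formula for lam ≥ 0
  have key : ∀ lam : ℝ, 0 ≤ lam →
      Matrix.trace (1 - (1 - hpS n lam) ^ m)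
        = ∑ i, (1 - (1 - (1 + lam * μ i)⁻¹) ^ m) := by
    intro lam hlam
    set d : Fin n → ℝ := fun i => 1 + lam * μ i with hd
    have hdne : ∀ i, d i ≠ 0 := by
      intro i
      have : 0 ≤ lam * μ i := mul_nonneg hlam (hμ0 i)
      simp only [hd]; positivity
    have h1 : (1 : Matrix (Fin n) (Fin n) ℝ) + lam • A = U * Matrix.diagonal d * star U := by
      have : Matrix.diagonal d
          = Matrix.diagonal (1 : Fin n → ℝ) + lam • Matrix.diagonal μ := by
        rw [← Matrix.diagonal_smul, ← Matrix.diagonal_add]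
        rfl
      rw [this, Matrix.mul_add, Matrix.add_mul, conj_one, Matrix.mul_smul,
        Matrix.smul_mul, ← hspec]
    have hinv : hpS n lam = U * Matrix.diagonal d⁻¹ * star U := by
      have hrinv : ((1 : Matrix (Fin n) (Fin n) ℝ) + lam • A)
          * (U * Matrix.diagonal d⁻¹ * star U) = 1 := by
        rw [h1, conj_mul]
        have : d * d⁻¹ = 1 := by
          funext i
          simp [Pi.mul_apply, mul_inv_cancel₀ (hdne i)]
        rw [this, conj_one]
      rw [hpS]
      exact Matrix.inv_eq_right_inv hrinv
    have h2 : (1 : Matrix (Fin n) (Fin n) ℝ) - hpS n lam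
        = U * Matrix.diagonal (1 - d⁻¹) * star U := by
      rw [hinv, ← conj_sub, conj_one]
    have h3 : (1 : Matrix (Fin n) (Fin n) ℝ) - (1 - hpS n lam) ^ m
        = U * Matrix.diagonal (1 - (1 - d⁻¹) ^ m) * star U := by
      rw [h2, conj_pow, ← conj_sub, conj_one]
    rw [h3]
    rw [Matrix.trace_mul_cycle, hU2, Matrix.one_mul, Matrix.trace_diagonal]
    exact Finset.sum_congr rfl fun i _ => by simp [hd]
  -- limits of the individual terms
  have hterm : ∀ i : Fin n,
      Tendsto (fun lam : ℝ => (1 - (1 - (1 + lam * μ i)⁻¹) ^ m))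
        atTop (nhds (if μ i = 0 then (1 : ℝ) else 0)) := by
    intro i
    by_cases hzi : μ i = 0
    · simp only [hzi, if_pos]
      have hm' : m ≠ 0 := by omega
      simpa [hzi, zero_pow hm'] using
        (tendsto_const_nhds : Tendsto (fun _ : ℝ => (1 : ℝ)) atTop (nhds 1))
    · have hpos : 0 < μ i := lt_of_le_of_ne (hμ0 i) (Ne.symm hzi)
      have h1 : Tendsto (fun lam : ℝ => 1 + lam * μ i) atTop atTop :=
        tendsto_atTop_add_const_left _ _ (Tendsto.atTop_mul_const hpos tendsto_id)
      have h2 : Tendsto (fun lam : ℝ => (1 + lam * μ i)⁻¹) atTop (nhds 0) :=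
        h1.inv_tendsto_atTop
      have h3 : Tendsto (fun lam : ℝ => (1 - (1 - (1 + lam * μ i)⁻¹) ^ m))
          atTop (nhds (1 - (1 - 0) ^ m)) :=
        tendsto_const_nhds.sub ((tendsto_const_nhds.sub h2).pow m)
      simpa [hzi] using h3
  -- counting the zero eigenvalues
  have hrankA : A.rank = n - 2 := by
    rw [hAdef, ← hDT, Matrix.rank_conjTranspose_mul_self, hD, secondDiff_rank n hn]
  have hcardne : Fintype.card {i // μ i ≠ 0} = n - 2 := by
    rw [← hrankA, hA.rank_eq_card_non_zero_eigs]
  have hcard0 : Fintype.card {i // μ i = 0} = 2 := by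
    have h := Fintype.card_subtype_compl (fun i : Fin n => μ i = 0)
    have hle : Fintype.card {i // μ i = 0} ≤ n := by
      simpa using Fintype.card_subtype_le (fun i : Fin n => μ i = 0)
    rw [Fintype.card_fin] at h
    have : Fintype.card {i // ¬ μ i = 0} = Fintype.card {i // μ i ≠ 0} := rfl
    omega
  have hsum : ∑ i : Fin n, (if μ i = 0 then (1 : ℝ) else 0) = 2 := by
    rw [Finset.sum_boole]
    have : (Finset.univ.filter fun i : Fin n => μ i = 0).card = 2 := by
      rw [← Fintype.card_subtype]
      exact hcard0
    rw [this]
    norm_num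
  -- assemble
  have hlimit : Tendsto (fun lam : ℝ => ∑ i, (1 - (1 - (1 + lam * μ i)⁻¹) ^ m))
      atTop (nhds 2) := by
    rw [← hsum]
    exact tendsto_finset_sum _ (fun i _ => hterm i)
  refine hlimit.congr' ?_
  filter_upwards [eventually_ge_atTop (0 : ℝ)] with lam hlam
  exact (key lam hlam).symm

end
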